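/- The function N ↦ (1/N)·(r^(N/2) - 1)·log(r^N/(r^N - 1)) is decreasing for real N ≥ 2, for every fixed real r ≥ 2. -/

import Mathlib

open Real

private lemma aux_hasDeriv (x : ℝ) (hx : 2 ≤ x) :
    HasDerivAt (fun x : ℝ => (x - 1) * (Real.log (x ^ 2) - Real.log (x ^ 2 - 1)))
      ((Real.log (x ^ 2) - Real.log (x ^ 2 - 1)) +
        (x - 1) * (2 * x / x ^ 2 - 2 * x / (x ^ 2 - 1))) x := by
  have h1 : x ^ 2 ≠ 0 := by nlinarith
  have h2 : x ^ 2 - 1 ≠ 0 := by nlinarith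
  have d1 : HasDerivAt (fun x : ℝ => x ^ 2) (2 * x) x := by
    simpa using (hasDerivAt_pow 2 x)
  have dlog1 : HasDerivAt (fun x : ℝ => Real.log (x ^ 2)) (2 * x / x ^ 2) x := d1.log h1
  have d2 : HasDerivAt (fun x : ℝ => x ^ 2 - 1) (2 * x) x := d1.sub_const 1
  have dlog2 : HasDerivAt (fun x : ℝ => Real.log (x ^ 2 - 1)) (2 * x / (x ^ 2 - 1)) x :=
    d2.log h2
  have dl : HasDerivAt (fun x : ℝ => x - 1) 1 x := (hasDerivAt_id x).sub_const 1
  have : HasDerivAt (fun x : ℝ => (x - 1) * (Real.log (x ^ 2) - Real.log (x ^ 2 - 1)))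
      (1 * (Real.log (x ^ 2) - Real.log (x ^ 2 - 1)) +
        (x - 1) * (2 * x / x ^ 2 - 2 * x / (x ^ 2 - 1))) x := dl.mul (dlog1.sub dlog2)
  convert this using 1
  ring

private lemma aux_anti :
    AntitoneOn (fun x : ℝ => (x - 1) * (Real.log (x ^ 2) - Real.log (x ^ 2 - 1)))
      (Set.Ici (2 : ℝ)) := by
  apply antitoneOn_of_deriv_nonpos (convex_Ici 2)
  · exact fun x hx => ((aux_hasDeriv x hx).differentiableAt.continuousAt).continuousWithinAt
  · intro x hx
    rw [interior_Ici] at hx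
    exact ((aux_hasDeriv x hx.le).differentiableAt).differentiableWithinAt
  · intro x hx
    rw [interior_Ici] at hx
    have hx2 : (2 : ℝ) < x := hx
    have hx0 : (0 : ℝ) < x := by linarith
    have hp : (0 : ℝ) < x ^ 2 - 1 := by nlinarith
    have hp2 : (0 : ℝ) < x ^ 2 := by positivity
    rw [(aux_hasDeriv x hx2.le).deriv]
    have hlog : Real.log (x ^ 2) - Real.log (x ^ 2 - 1) ≤ 1 / (x ^ 2 - 1) := by
      rw [← Real.log_div (ne_of_gt hp2) (ne_of_gt hp)]
      have h := Real.log_le_sub_one_of_pos (div_pos hp2 hp)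
      have heq : x ^ 2 / (x ^ 2 - 1) - 1 = 1 / (x ^ 2 - 1) := by field_simp; ring
      linarith [heq ▸ h]
    have heq2 : (x - 1) * (2 * x / x ^ 2 - 2 * x / (x ^ 2 - 1)) = -(2 / (x * (x + 1))) := by
      field_simp
      ring
    have hineq : 1 / (x ^ 2 - 1) ≤ 2 / (x * (x + 1)) := by
      rw [div_le_div_iff₀ hp (by positivity)]
      nlinarith
    rw [heq2]
    linarith

/-- For fixed `r ≥ 2`, the function `N ↦ (1/N)(r^(N/2)-1) log(r^N/(r^N-1))`
is decreasing on `[2, ∞)`. -/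
theorem stmt7 (r : ℝ) (hr : 2 ≤ r) :
    AntitoneOn (fun N : ℝ => (r ^ (N / 2) - 1) * Real.log (r ^ N / (r ^ N - 1)) / N)
      (Set.Ici (2 : ℝ)) := by
  have hr0 : (0 : ℝ) ≤ r := by linarith
  have hr1 : (1 : ℝ) ≤ r := by linarith
  have key : ∀ N : ℝ, 2 ≤ N → 2 ≤ r ^ (N / 2) ∧ r ^ N = (r ^ (N / 2)) ^ 2 := by
    intro N hN
    constructor
    · calc (2 : ℝ) ≤ r := hr
        _ = r ^ (1 : ℝ) := (Real.rpow_one r).symm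
        _ ≤ r ^ (N / 2) := Real.rpow_le_rpow_of_exponent_le hr1 (by linarith)
    · rw [← Real.rpow_natCast (r ^ (N / 2)) 2, ← Real.rpow_mul hr0]
      norm_num
  intro a ha b hb hab
  simp only [Set.mem_Ici] at ha hb
  obtain ⟨hA2, hAeq⟩ := key a ha
  obtain ⟨hB2, hBeq⟩ := key b hb
  set A := r ^ (a / 2) with hA
  set B := r ^ (b / 2) with hB
  have hAB : A ≤ B := Real.rpow_le_rpow_of_exponent_le hr1 (by linarith)
  have hApos : (0 : ℝ) < A ^ 2 := by positivity
  have hBpos : (0 : ℝ) < B ^ 2 := by positivity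
  have hA1 : (0 : ℝ) < A ^ 2 - 1 := by nlinarith
  have hB1 : (0 : ℝ) < B ^ 2 - 1 := by nlinarith
  simp only [hAeq, hBeq]
  rw [Real.log_div (ne_of_gt hApos) (ne_of_gt hA1),
    Real.log_div (ne_of_gt hBpos) (ne_of_gt hB1)]
  have hanti := aux_anti (Set.mem_Ici.mpr hA2) (Set.mem_Ici.mpr hB2) hAB
  simp only at hanti
  have hAnn : 0 ≤ (A - 1) * (Real.log (A ^ 2) - Real.log (A ^ 2 - 1)) := by
    apply mul_nonneg (by linarith)
    have := Real.log_le_log hA1 (by linarith : A ^ 2 - 1 ≤ A ^ 2)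
    linarith
  exact div_le_div₀ hAnn hanti (by linarith) hab
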